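/- Let α ∈ (0,1) and m ∈ ℕ₀. Then for every t ∈ [0,1], ∫₀ᵗ |∑_{k=0}^{2^m−1}(e_{m,k}(t) − e_{m,k}(s))| / (t−s)^{α+1} ds ≤ 2^{m(α − 1/2)} ( 2^α/α + (2^{α−1} + 1)/(1−α) ). -/

import Mathlib

open MeasureTheory Set

/-- The basic Faber–Schauder tent function. -/
noncomputable def e00 (t : ℝ) : ℝ := max (min t (1 - t)) 0

/-- The Faber–Schauder function `e_{m,k}`. -/
noncomputable def FS (m k : ℕ) (t : ℝ) : ℝ := (2 : ℝ) ^ (-(m : ℝ) / 2) * e00 (2 ^ m * t - k)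

lemma e00_of_nonpos {x : ℝ} (hx : x ≤ 0) : e00 x = 0 :=
  max_eq_right (le_trans (min_le_left _ _) hx)

lemma e00_of_one_le {x : ℝ} (hx : 1 ≤ x) : e00 x = 0 :=
  max_eq_right (le_trans (min_le_right _ _) (by linarith))

lemma sum_e00_eq (N : ℕ) {x : ℝ} (h0 : 0 ≤ x) (hN : x ≤ N) :
    ∑ k ∈ Finset.range N, e00 (x - k) = |x - round x| := by
  rcases eq_or_lt_of_le hN with h | h
  · have hz : ∀ k ∈ Finset.range N, e00 (x - k) = 0 := by
      intro k hk
      apply e00_of_one_le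
      have hkN : (k : ℝ) + 1 ≤ N := by
        exact_mod_cast Nat.succ_le_of_lt (Finset.mem_range.mp hk)
      linarith [h.symm.le]
    rw [Finset.sum_eq_zero hz, h]
    simp
  · have hfl : (0 : ℤ) ≤ ⌊x⌋ := Int.floor_nonneg.mpr h0
    set k0 : ℕ := ⌊x⌋.toNat with hk0def
    have hk0 : (k0 : ℝ) = (⌊x⌋ : ℝ) := by
      exact_mod_cast Int.toNat_of_nonneg hfl
    have hfle : (k0 : ℝ) ≤ x := hk0 ▸ Int.floor_le x
    have hflt : x < (k0 : ℝ) + 1 := by rw [hk0]; exact Int.lt_floor_add_one x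
    have hk0N : k0 ∈ Finset.range N := by
      rw [Finset.mem_range]
      by_contra hc
      push_neg at hc
      have : (N : ℝ) ≤ (k0 : ℝ) := by exact_mod_cast hc
      linarith
    rw [Finset.sum_eq_single_of_mem k0 hk0N]
    · have hfr : x - (k0 : ℝ) = Int.fract x := by rw [hk0]; exact Int.self_sub_floor x
      rw [hfr, abs_sub_round_eq_min]
      have h1 := Int.fract_nonneg x
      have h2 := Int.fract_lt_one x
      unfold e00
      rw [max_eq_left (le_min h1 (by linarith))]
    · intro k hk hne
      rcases lt_or_gt_of_ne hne with hlt | hgt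
      · apply e00_of_one_le
        have : (k : ℝ) + 1 ≤ (k0 : ℝ) := by exact_mod_cast Nat.succ_le_of_lt hlt
        linarith
      · apply e00_of_nonpos
        have : (k0 : ℝ) + 1 ≤ (k : ℝ) := by exact_mod_cast Nat.succ_le_of_lt hgt
        linarith

lemma abs_sub_round_le_half (x : ℝ) : |x - round x| ≤ 1 / 2 := by
  rw [abs_sub_round_eq_min]
  have h1 := Int.fract_nonneg x
  have h2 := Int.fract_lt_one x
  rcases le_or_gt (Int.fract x) (1 / 2) with h | h
  · exact le_trans (min_le_left _ _) h
  · exact le_trans (min_le_right _ _) (by linarith)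

lemma abs_sub_round_lip (x y : ℝ) : |x - round x| - |y - round y| ≤ |x - y| := by
  have h1 : |x - (round y : ℝ)| ≤ |x - y| + |y - (round y : ℝ)| := abs_sub_le x y _
  have h2 := round_le x (round y)
  linarith

lemma G_eq (m : ℕ) {t : ℝ} (h0 : 0 ≤ t) (h1 : t ≤ 1) :
    ∑ k ∈ Finset.range (2 ^ m), FS m k t
      = (2 : ℝ) ^ (-(m : ℝ) / 2) * |2 ^ m * t - round ((2 : ℝ) ^ m * t)| := by
  unfold FS
  rw [← Finset.mul_sum, sum_e00_eq (2 ^ m) (by positivity)]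
  push_cast
  nlinarith [pow_pos (show (0:ℝ) < 2 by norm_num) m]

lemma G_diff_bounds (m : ℕ) {s t : ℝ} (hs0 : 0 ≤ s) (hs1 : s ≤ 1) (ht0 : 0 ≤ t)
    (ht1 : t ≤ 1) :
    |∑ k ∈ Finset.range (2 ^ m), FS m k t - ∑ k ∈ Finset.range (2 ^ m), FS m k s|
      ≤ (2 : ℝ) ^ (-(m : ℝ) / 2) * min ((2 : ℝ) ^ m * |t - s|) 1 := by
  rw [G_eq m ht0 ht1, G_eq m hs0 hs1, ← mul_sub, abs_mul,
    abs_of_pos (Real.rpow_pos_of_pos (by norm_num) _)]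
  apply mul_le_mul_of_nonneg_left _ (Real.rpow_pos_of_pos (by norm_num : (0:ℝ) < 2) _).le
  set X := (2 : ℝ) ^ m * t with hX
  set Y := (2 : ℝ) ^ m * s with hY
  refine le_min ?_ ?_
  · have h1 := abs_sub_round_lip X Y
    have h2 := abs_sub_round_lip Y X
    have h3 : |X - Y| = (2 : ℝ) ^ m * |t - s| := by
      rw [hX, hY, ← mul_sub, abs_mul, abs_of_pos (pow_pos (show (0:ℝ) < 2 by norm_num) m)]
    rw [abs_sub_comm Y X] at h2
    rw [← h3, abs_sub_le_iff]
    constructor <;> linarith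
  · have h1 := abs_sub_round_le_half X
    have h2 := abs_sub_round_le_half Y
    have h3 : 0 ≤ |Y - round Y| := abs_nonneg _
    have h4 : 0 ≤ |X - round X| := abs_nonneg _
    rw [abs_sub_le_iff]
    constructor <;> linarith

lemma div_rpow_aux1 {u : ℝ} (hu : 0 < u) (α : ℝ) : u / u ^ (α + 1) = u ^ (-α) := by
  rw [Real.rpow_add hu, Real.rpow_one, Real.rpow_neg hu.le]
  have h1 : u ^ α ≠ 0 := (Real.rpow_pos_of_pos hu α).ne'
  field_simp

theorem FS_sum_seminorm_bound (α : ℝ) (hα : α ∈ Set.Ioo (0 : ℝ) 1) (m : ℕ)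
    (t : ℝ) (ht : t ∈ Set.Icc (0 : ℝ) 1) :
    (∫ s in (0 : ℝ)..t,
        |∑ k ∈ Finset.range (2 ^ m), (FS m k t - FS m k s)| / (t - s) ^ (α + 1)) ≤
      (2 : ℝ) ^ ((m : ℝ) * (α - 1 / 2)) *
        ((2 : ℝ) ^ α / α + ((2 : ℝ) ^ (α - 1) + 1) / (1 - α)) := by
  obtain ⟨hα0, hα1⟩ := hα
  obtain ⟨ht0, ht1⟩ := ht
  set E : ℝ := (2 : ℝ) ^ (-(m : ℝ) / 2) with hE
  set P : ℝ := (2 : ℝ) ^ m with hP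
  have hEpos : 0 < E := Real.rpow_pos_of_pos (by norm_num) _
  have hPpos : 0 < P := pow_pos (by norm_num) m
  set δ : ℝ := P⁻¹ with hδ
  have hδpos : 0 < δ := inv_pos.mpr hPpos
  set C : ℝ := (2 : ℝ) ^ ((m : ℝ) * (α - 1 / 2)) with hC
  have hCpos : 0 < C := Real.rpow_pos_of_pos (by norm_num) _
  have hPr : P = (2 : ℝ) ^ (m : ℝ) := (Real.rpow_natCast 2 m).symm
  have hδr : δ = (2 : ℝ) ^ (-(m : ℝ)) := by
    rw [hδ, hPr, ← Real.rpow_neg (by norm_num)]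
  have hEP : E * P * δ ^ (-α + 1) = C := by
    rw [hE, hPr, hδr, ← Real.rpow_mul (by norm_num),
      ← Real.rpow_add (by norm_num : (0:ℝ) < 2), ← Real.rpow_add (by norm_num : (0:ℝ) < 2), hC]
    ring_nf
  have hEδ : E * δ ^ (-α) = C := by
    rw [hE, hδr, ← Real.rpow_mul (by norm_num), ← Real.rpow_add (by norm_num : (0:ℝ) < 2), hC]
    ring_nf
  -- rewrite integrand
  have hrw : (fun s : ℝ =>
      |∑ k ∈ Finset.range (2 ^ m), (FS m k t - FS m k s)| / (t - s) ^ (α + 1))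
        = fun s : ℝ => |∑ k ∈ Finset.range (2 ^ m), FS m k t -
            ∑ k ∈ Finset.range (2 ^ m), FS m k s| / (t - s) ^ (α + 1) := by
    funext s; rw [Finset.sum_sub_distrib]
  rw [hrw]
  set f : ℝ → ℝ := fun s =>
    |∑ k ∈ Finset.range (2 ^ m), FS m k t - ∑ k ∈ Finset.range (2 ^ m), FS m k s|
      / (t - s) ^ (α + 1) with hf
  set g2 : ℝ → ℝ := fun s => E * P * (t - s) ^ (-α) with hg2
  set g1 : ℝ → ℝ := fun s => E * (t - s) ^ (-(α + 1)) with hg1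
  -- measurability
  have hGcont : Continuous fun s : ℝ => ∑ k ∈ Finset.range (2 ^ m), FS m k s := by
    apply continuous_finset_sum
    intro k _
    unfold FS e00
    fun_prop
  have hfmeas : Measurable f := by
    apply Measurable.div
    · exact ((continuous_const.sub hGcont).abs).measurable
    · exact (measurable_const.sub measurable_id).pow_const _
  -- pointwise bounds
  have hfnonneg : ∀ s, s ≤ t → 0 ≤ f s := fun s hs =>
    div_nonneg (abs_nonneg _) (Real.rpow_nonneg (by linarith) _)
  have hfg2 : ∀ s ∈ Icc (0 : ℝ) t, f s ≤ g2 s := by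
    intro s hs
    obtain ⟨hs0, hst⟩ := hs
    rcases eq_or_lt_of_le hst with h | h
    · have h1 : f s = 0 := by
        simp only [hf, h, sub_self, abs_zero, zero_div]
      have h2 : g2 s = 0 := by
        simp only [hg2, h, sub_self, Real.zero_rpow (by linarith : -α ≠ 0), mul_zero]
      rw [h1, h2]
    · have hu : 0 < t - s := by linarith
      have hb := G_diff_bounds m hs0 (by linarith) ht0 ht1
      have hmin : min ((2:ℝ) ^ m * |t - s|) 1 ≤ P * (t - s) := by
        rw [abs_of_pos hu]; exact min_le_left _ _
      have hnum : |∑ k ∈ Finset.range (2 ^ m), FS m k t -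
          ∑ k ∈ Finset.range (2 ^ m), FS m k s| ≤ E * (P * (t - s)) := by
        calc _ ≤ E * min ((2:ℝ) ^ m * |t - s|) 1 := hb
          _ ≤ E * (P * (t - s)) := by
            exact mul_le_mul_of_nonneg_left hmin hEpos.le
      calc f s ≤ (E * (P * (t - s))) / (t - s) ^ (α + 1) := by
            simp only [hf]
            exact div_le_div_of_nonneg_right hnum (Real.rpow_nonneg hu.le _)
          _ = g2 s := by
            simp only [hg2]
            rw [mul_div_assoc, mul_div_assoc, div_rpow_aux1 hu]
            ring
  have hfg1 : ∀ s, 0 ≤ s → δ ≤ t - s → f s ≤ g1 s := by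
    intro s hs0 hδs
    have hu : 0 < t - s := lt_of_lt_of_le hδpos hδs
    have hb := G_diff_bounds m hs0 (by linarith) ht0 ht1
    have hnum : |∑ k ∈ Finset.range (2 ^ m), FS m k t -
        ∑ k ∈ Finset.range (2 ^ m), FS m k s| ≤ E := by
      calc _ ≤ E * min ((2:ℝ) ^ m * |t - s|) 1 := hb
        _ ≤ E * 1 := mul_le_mul_of_nonneg_left (min_le_right _ _) hEpos.le
        _ = E := mul_one E
    have hden : 0 < (t - s) ^ (α + 1) := Real.rpow_pos_of_pos hu _
    calc f s ≤ E / (t - s) ^ (α + 1) := by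
          simp only [hf]
          exact div_le_div_of_nonneg_right hnum hden.le
        _ = g1 s := by
          simp only [hg1]
          rw [Real.rpow_neg hu.le, div_eq_mul_inv]
  -- integrability of g2 on subintervals of [0, t]
  have hg2int : ∀ c, 0 ≤ c → c ≤ t → IntervalIntegrable g2 volume c t := by
    intro c hc0 hct
    have base : IntervalIntegrable (fun u : ℝ => u ^ (-α)) volume 0 t :=
      intervalIntegral.intervalIntegrable_rpow' (by linarith)
    have comp := (base.comp_sub_left t).symm
    simp only [sub_zero, sub_self] at comp
    have : IntervalIntegrable (fun s : ℝ => (t - s) ^ (-α)) volume c t :=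
      comp.mono_set (by
        rw [uIcc_of_le hct, uIcc_of_le ht0]
        exact Icc_subset_Icc hc0 le_rfl)
    exact this.const_mul (E * P)
  -- integrability of f on subintervals of [0, t], dominated by g2
  have hfint : ∀ c, 0 ≤ c → c ≤ t → IntervalIntegrable f volume c t := by
    intro c hc0 hct
    apply (hg2int c hc0 hct).mono_fun hfmeas.aestronglyMeasurable.restrict
    refine (ae_restrict_iff' measurableSet_uIoc).mpr (Filter.Eventually.of_forall ?_)
    intro s hs
    rw [uIoc_of_le hct] at hs
    have hs' : s ∈ Icc (0:ℝ) t := ⟨by linarith [hs.1], hs.2⟩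
    have h1 := hfg2 s hs'
    have h2 := hfnonneg s hs'.2
    simp only [Real.norm_eq_abs]
    rw [abs_of_nonneg h2]
    exact le_trans h1 (le_abs_self _)
  -- value of ∫ g2 over c..t for 0 ≤ c ≤ t
  have hg2val : ∀ c, 0 ≤ c → c ≤ t →
      ∫ s in c..t, g2 s = E * P * ((t - c) ^ (-α + 1) / (-α + 1)) := by
    intro c hc0 hct
    simp only [hg2]
    rw [intervalIntegral.integral_const_mul]
    have : ∫ s in c..t, (t - s) ^ (-α) = ∫ u in (t - t)..(t - c), u ^ (-α) :=
      intervalIntegral.integral_comp_sub_left (fun u => u ^ (-α)) t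
    rw [this, sub_self, integral_rpow (Or.inl (by linarith)),
      Real.zero_rpow (by linarith : -α + 1 ≠ 0)]
    ring
  -- main case split
  rcases le_or_gt t δ with hcase | hcase
  · -- small t : single bound
    have h1 : ∫ s in (0:ℝ)..t, f s ≤ ∫ s in (0:ℝ)..t, g2 s :=
      intervalIntegral.integral_mono_on ht0 (hfint 0 le_rfl ht0) (hg2int 0 le_rfl ht0)
        (fun s hs => hfg2 s hs)
    have h2 : ∫ s in (0:ℝ)..t, g2 s = E * P * ((t - 0) ^ (-α + 1) / (-α + 1)) :=
      hg2val 0 le_rfl ht0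
    have h3 : (t - 0) ^ (-α + 1) ≤ δ ^ (-α + 1) := by
      rw [sub_zero]
      exact Real.rpow_le_rpow ht0 hcase (by linarith)
    have h4 : ∫ s in (0:ℝ)..t, g2 s ≤ C / (1 - α) := by
      rw [h2, ← hEP]
      rw [mul_div_assoc]
      apply mul_le_mul_of_nonneg_left _ (by positivity)
      rw [show -α + 1 = 1 - α by ring] at h3 ⊢
      exact div_le_div_of_nonneg_right h3 (by linarith)
    have hfinal : C / (1 - α) ≤ C * ((2:ℝ) ^ α / α + ((2:ℝ) ^ (α - 1) + 1) / (1 - α)) := by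
      have h2α : (0:ℝ) < (2:ℝ) ^ α := Real.rpow_pos_of_pos (by norm_num) _
      have h2α1 : (0:ℝ) < (2:ℝ) ^ (α - 1) := Real.rpow_pos_of_pos (by norm_num) _
      have key : 1 / (1 - α) ≤ (2:ℝ) ^ α / α + ((2:ℝ) ^ (α - 1) + 1) / (1 - α) := by
        have e1 : (0:ℝ) ≤ (2:ℝ) ^ α / α := by positivity
        have e2 : 1 / (1 - α) ≤ ((2:ℝ) ^ (α - 1) + 1) / (1 - α) := by
          exact div_le_div_of_nonneg_right (by linarith) (by linarith)
        linarith
      calc C / (1 - α) = C * (1 / (1 - α)) := by ring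
        _ ≤ _ := mul_le_mul_of_nonneg_left key hCpos.le
    exact le_trans h1 (le_trans h4 hfinal)
  · -- large t : split at c = t - δ
    set c : ℝ := t - δ with hcdef
    have hc0 : 0 < c := by rw [hcdef]; linarith
    have hct : c ≤ t := by rw [hcdef]; linarith
    -- integrability of g1 on [0, c]
    have hg1cont : ContinuousOn g1 (uIcc 0 c) := by
      rw [uIcc_of_le hc0.le]
      apply ContinuousOn.mul continuousOn_const
      apply ContinuousOn.rpow_const (continuous_const.sub continuous_id').continuousOn
      intro x hx
      left
      have h1 : x ≤ c := hx.2
      rw [hcdef] at h1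
      have : δ ≤ t - x := by linarith
      intro hcon
      have hcon' : t - x = 0 := hcon
      rw [hcon'] at this
      linarith [hδpos]
    have hg1int : IntervalIntegrable g1 volume 0 c := hg1cont.intervalIntegrable
    -- integrability of f on [0, c], dominated by g1
    have hfint1 : IntervalIntegrable f volume 0 c := by
      apply hg1int.mono_fun hfmeas.aestronglyMeasurable.restrict
      refine (ae_restrict_iff' measurableSet_uIoc).mpr (Filter.Eventually.of_forall ?_)
      intro s hs
      rw [uIoc_of_le hc0.le] at hs
      have hs0 : 0 ≤ s := hs.1.le
      have hsδ : δ ≤ t - s := by rw [hcdef] at hs; linarith [hs.2]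
      have h1 := hfg1 s hs0 hsδ
      have h2 := hfnonneg s (by linarith [hδpos])
      have hg1nn : 0 ≤ g1 s := by
        simp only [hg1]
        apply mul_nonneg hEpos.le (Real.rpow_nonneg (by linarith [hδpos]) _)
      simp only [Real.norm_eq_abs]
      rw [abs_of_nonneg h2, abs_of_nonneg hg1nn]
      exact h1
    have hfint2 : IntervalIntegrable f volume c t := hfint c hc0.le hct
    -- bound on [c, t]
    have hI2 : ∫ s in c..t, f s ≤ C / (1 - α) := by
      have h1 : ∫ s in c..t, f s ≤ ∫ s in c..t, g2 s :=
        intervalIntegral.integral_mono_on hct hfint2 (hg2int c hc0.le hct)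
          (fun s hs => hfg2 s ⟨le_trans hc0.le hs.1, hs.2⟩)
      have h2 := hg2val c hc0.le hct
      have h3 : t - c = δ := by rw [hcdef]; ring
      rw [h2, h3] at h1
      calc ∫ s in c..t, f s ≤ E * P * (δ ^ (-α + 1) / (-α + 1)) := h1
        _ = C / (1 - α) := by
          rw [← hEP]
          field_simp
          ring_nf
          have h1α : (1:ℝ) - α ≠ 0 := by linarith
          linear_combination mul_inv_cancel₀ h1α
    -- bound on [0, c]
    have hI1 : ∫ s in (0:ℝ)..c, f s ≤ C / α := by
      have h1 : ∫ s in (0:ℝ)..c, f s ≤ ∫ s in (0:ℝ)..c, g1 s := by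
        apply intervalIntegral.integral_mono_on hc0.le hfint1 hg1int
        intro s hs
        refine hfg1 s hs.1 ?_
        have h := hs.2
        rw [hcdef] at h
        linarith
      have h2 : ∫ s in (0:ℝ)..c, g1 s = E * ((t ^ (-(α+1) + 1) - δ ^ (-(α+1) + 1)) / (-(α+1) + 1)) := by
        simp only [hg1]
        rw [intervalIntegral.integral_const_mul]
        have : ∫ s in (0:ℝ)..c, (t - s) ^ (-(α+1)) = ∫ u in (t - c)..(t - 0), u ^ (-(α+1)) :=
          intervalIntegral.integral_comp_sub_left (fun u => u ^ (-(α+1))) t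
        rw [this, sub_zero]
        have h3 : t - c = δ := by rw [hcdef]; ring
        rw [h3, integral_rpow (Or.inr ⟨by intro hcon; apply hα0.ne'; linarith, by
          rw [uIcc_of_le (by linarith : δ ≤ t)]
          intro hmem
          exact absurd hmem.1 (by linarith)⟩)]
      have h4 : E * ((t ^ (-(α+1) + 1) - δ ^ (-(α+1) + 1)) / (-(α+1) + 1)) ≤ C / α := by
        have he1 : -(α+1) + 1 = -α := by ring
        rw [he1]
        have htpos : (0:ℝ) < t := by linarith
        have h5 : (0:ℝ) < t ^ (-α) := Real.rpow_pos_of_pos htpos _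
        have h6 : E * ((t ^ (-α) - δ ^ (-α)) / (-α)) = E * ((δ ^ (-α) - t ^ (-α)) / α) := by
          rw [div_neg, ← neg_div, neg_sub]
        rw [h6]
        calc E * ((δ ^ (-α) - t ^ (-α)) / α) ≤ E * (δ ^ (-α) / α) := by
              apply mul_le_mul_of_nonneg_left _ hEpos.le
              exact div_le_div_of_nonneg_right (by linarith) hα0.le
          _ = C / α := by rw [← hEδ]; ring
      linarith [h2 ▸ h1]
    -- combine
    have hsplit : ∫ s in (0:ℝ)..t, f s = (∫ s in (0:ℝ)..c, f s) + ∫ s in c..t, f s :=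
      (intervalIntegral.integral_add_adjacent_intervals hfint1 hfint2).symm
    have hfinal : C / α + C / (1 - α) ≤
        C * ((2:ℝ) ^ α / α + ((2:ℝ) ^ (α - 1) + 1) / (1 - α)) := by
      have h2α : (1:ℝ) ≤ (2:ℝ) ^ α := Real.one_le_rpow (by norm_num) hα0.le
      have h2α1 : (0:ℝ) < (2:ℝ) ^ (α - 1) := Real.rpow_pos_of_pos (by norm_num) _
      have e1 : C / α ≤ C * ((2:ℝ) ^ α / α) := by
        rw [div_eq_mul_one_div]
        exact mul_le_mul_of_nonneg_left (div_le_div_of_nonneg_right (by linarith) hα0.le) hCpos.le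
      have e2 : C / (1 - α) ≤ C * (((2:ℝ) ^ (α - 1) + 1) / (1 - α)) := by
        rw [div_eq_mul_one_div]
        exact mul_le_mul_of_nonneg_left
          (div_le_div_of_nonneg_right (by linarith) (by linarith)) hCpos.le
      calc C / α + C / (1 - α) ≤ C * ((2:ℝ) ^ α / α) + C * (((2:ℝ) ^ (α - 1) + 1) / (1 - α)) :=
            add_le_add e1 e2
        _ = _ := by ring
    rw [hsplit]
    calc (∫ s in (0:ℝ)..c, f s) + ∫ s in c..t, f s ≤ C / α + C / (1 - α) := add_le_add hI1 hI2
      _ ≤ _ := hfinal
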